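/- Suppose τ : C → T and τ̃ : C → T̃ are weak stability functions, n ≥ 1, and κ : {1,…,n} → C satisfies S({1,…,n},≤,κ,τ,τ̃) ≠ 0. Then there exist k, l ∈ {1,…,n} such that τ(κ(k)) ≤ τ(κ(i)) ≤ τ(κ(l)) for all i = 1,…,n, and τ̃(κ(k)) ≥ τ̃(κ({1,…,n})) ≥ τ̃(κ(l)). -/

import Mathlib

open scoped Classical
open Finset Function

/-- A weak stability function on `C ⊆ A` with values in a total order:
whenever `α, γ ∈ C` (so that `β = α + γ`), either `τ α ≤ τ β ≤ τ γ` or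
`τ α ≥ τ β ≥ τ γ`. -/
def WeakStability {A T : Type*} [AddCommGroup A] [LinearOrder T] (C : Set A) (τ : A → T) : Prop :=
  ∀ α γ : A, α ∈ C → γ ∈ C →
    (τ α ≤ τ (α + γ) ∧ τ (α + γ) ≤ τ γ) ∨ (τ γ ≤ τ (α + γ) ∧ τ (α + γ) ≤ τ α)

/-- Sum `κ 0 + ⋯ + κ i`. -/
def lowSum {A : Type*} [AddCommGroup A] (κ : ℕ → A) (i : ℕ) : A :=
  ∑ j ∈ Finset.range (i + 1), κ j

/-- Sum `κ (i+1) + ⋯ + κ (n-1)`. -/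
def highSum {A : Type*} [AddCommGroup A] (κ : ℕ → A) (i n : ℕ) : A :=
  ∑ j ∈ Finset.Ico (i + 1) n, κ j

/-- Condition (a) at position `i` in the definition of the coefficient `S`. -/
def SCondA {A T T' : Type*} [AddCommGroup A] [LinearOrder T] [LinearOrder T']
    (τ : A → T) (τ' : A → T') (n : ℕ) (κ : ℕ → A) (i : ℕ) : Prop :=
  τ (κ i) ≤ τ (κ (i + 1)) ∧ τ' (highSum κ i n) < τ' (lowSum κ i)

/-- Condition (b) at position `i` in the definition of the coefficient `S`. -/
def SCondB {A T T' : Type*} [AddCommGroup A] [LinearOrder T] [LinearOrder T']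
    (τ : A → T) (τ' : A → T') (n : ℕ) (κ : ℕ → A) (i : ℕ) : Prop :=
  τ (κ (i + 1)) < τ (κ i) ∧ τ' (lowSum κ i) ≤ τ' (highSum κ i n)

/-- The transformation coefficient `S({1,…,n},≤,κ,τ,τ')` for the sequence
`κ 0, …, κ (n-1)` (indexed from `0`). -/
noncomputable def Scoeff {A T T' : Type*} [AddCommGroup A] [LinearOrder T] [LinearOrder T']
    (τ : A → T) (τ' : A → T') (n : ℕ) (κ : ℕ → A) : ℤ :=
  if ∀ i ∈ Finset.range (n - 1), SCondA τ τ' n κ i ∨ SCondB τ τ' n κ i then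
    (-1) ^ ((Finset.range (n - 1)).filter (SCondA τ τ' n κ)).card
  else 0

/-- The sequence `κ 0, …, κ (n-1)` is `τ`-reversing. -/
def Reversing {A T : Type*} [AddCommGroup A] [LinearOrder T] (τ : A → T) (n : ℕ) (κ : ℕ → A) :
    Prop :=
  ∀ i, i + 1 < n → τ (κ (i + 1)) < τ (κ i)

/-- The sequence `κ 0, …, κ (n-1)` is `τ`-semistable. -/
def Semistable {A T : Type*} [AddCommGroup A] [LinearOrder T] (τ : A → T) (n : ℕ) (κ : ℕ → A) :
    Prop :=
  ∀ i, i + 1 < n → τ (lowSum κ i) ≤ τ (highSum κ i n)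

/-- Extend a `Fin n`-indexed sequence to `ℕ` by zero. -/
def toSeq {A : Type*} [AddCommGroup A] {n : ℕ} (κ : Fin n → A) : ℕ → A :=
  fun j => if h : j < n then κ ⟨j, h⟩ else 0

/-- The subsequence of `κ` on a subset `s ⊆ Fin n`, enumerated in increasing order. -/
noncomputable def fiberSeq {A : Type*} [AddCommGroup A] {n : ℕ} (κ : Fin n → A)
    (s : Finset (Fin n)) : ℕ → A :=
  fun j => if h : j < s.card then κ (s.orderIsoOfFin rfl ⟨j, h⟩).1 else 0

/-- The transformation coefficient `U({1,…,n},≤,κ,τ,τ')`. -/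
noncomputable def Ucoeff {A T T' : Type*} [AddCommGroup A] [LinearOrder T] [LinearOrder T']
    (τ : A → T) (τ' : A → T') (n : ℕ) (κ : ℕ → A) : ℚ :=
  ∑ l ∈ Finset.Icc 1 n, ∑ m ∈ Finset.Icc l n,
    ∑ p ∈ Finset.univ.filter
        (fun p : (Fin n → Fin m) × (Fin m → Fin l) =>
          Surjective p.1 ∧ Monotone p.1 ∧ Surjective p.2 ∧ Monotone p.2),
      (if (∀ i : Fin n, τ (κ i.1) =
              τ (∑ j ∈ Finset.univ.filter (fun j : Fin n => p.1 j = p.1 i), κ j.1)) ∧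
          (∀ a : Fin l,
              τ' (∑ j ∈ Finset.univ.filter (fun j : Fin n => p.2 (p.1 j) = a), κ j.1) =
              τ' (∑ j ∈ Finset.range n, κ j)) then
        (∏ a : Fin l,
          ((Scoeff τ τ' (Finset.univ.filter (fun b : Fin m => p.2 b = a)).card
            (fiberSeq
              (fun b : Fin m => ∑ j ∈ Finset.univ.filter (fun j : Fin n => p.1 j = b), κ j.1)
              (Finset.univ.filter (fun b : Fin m => p.2 b = a)))) : ℚ))
        * ((-1 : ℚ) ^ (l - 1) / (l : ℚ))
        * ∏ b : Fin m,
            ((1 : ℚ) / (Nat.factorial (Finset.univ.filter (fun j : Fin n => p.1 j = b)).card : ℚ))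
      else 0)

theorem stmt2 {A T T' : Type*} [AddCommGroup A] [LinearOrder T] [LinearOrder T']
    (C : Set A) (hC : ∀ a b : A, a ∈ C → b ∈ C → a + b ∈ C) (h0 : (0 : A) ∉ C)
    (τ : A → T) (τt : A → T') (hτ : WeakStability C τ) (hτt : WeakStability C τt)
    (n : ℕ) (hn : 1 ≤ n) (κ : ℕ → A) (hκ : ∀ i, i < n → κ i ∈ C)
    (hS : Scoeff τ τt n κ ≠ 0) :
    ∃ k l : ℕ, k < n ∧ l < n ∧
      (∀ i, i < n → τ (κ k) ≤ τ (κ i) ∧ τ (κ i) ≤ τ (κ l)) ∧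
      τt (∑ j ∈ Finset.range n, κ j) ≤ τt (κ k) ∧
      τt (κ l) ≤ τt (∑ j ∈ Finset.range n, κ j) := by
  classical
  -- Extract the hypothesis that all conditions hold
  have H : ∀ i ∈ Finset.range (n-1), SCondA τ τt n κ i ∨ SCondB τ τt n κ i := by
    by_contra hcon
    apply hS
    unfold Scoeff
    rw [if_neg hcon]
  have H' : ∀ i, i + 1 < n → SCondA τ τt n κ i ∨ SCondB τ τt n κ i := by
    intro i hi
    exact H i (Finset.mem_range.mpr (by omega))
  -- Membership facts
  have hmemIco : ∀ b a : ℕ, a < b → b ≤ n → (∑ j ∈ Finset.Ico a b, κ j) ∈ C := by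
    intro b
    induction b with
    | zero => intro a h _; omega
    | succ m ih =>
      intro a hab hbn
      rcases Nat.lt_or_ge a m with h | h
      · rw [Finset.sum_Ico_succ_top (by omega)]
        exact hC _ _ (ih a h (by omega)) (hκ m (by omega))
      · have ham : a = m := by omega
        subst ham
        rw [Finset.sum_Ico_succ_top (by omega), Finset.Ico_self, Finset.sum_empty, zero_add]
        exact hκ a (by omega)
  have hlowmem : ∀ i, i < n → lowSum κ i ∈ C := by
    intro i hi
    unfold lowSum
    rw [Finset.range_eq_Ico]
    exact hmemIco (i+1) 0 (by omega) (by omega)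
  have hhighmem : ∀ i, i + 1 < n → highSum κ i n ∈ C := by
    intro i hi
    exact hmemIco n (i+1) hi le_rfl
  have hsplit : ∀ i, i < n → lowSum κ i + highSum κ i n = ∑ j ∈ Finset.range n, κ j := by
    intro i hi
    unfold lowSum highSum
    rw [Finset.range_eq_Ico, Finset.range_eq_Ico]
    exact Finset.sum_Ico_consecutive κ (Nat.zero_le (i+1)) (by omega : i + 1 ≤ n)
  -- Between facts
  have hbetA : ∀ i, i + 1 < n → SCondA τ τt n κ i →
      τt (highSum κ i n) ≤ τt (∑ j ∈ Finset.range n, κ j) ∧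
      τt (∑ j ∈ Finset.range n, κ j) ≤ τt (lowSum κ i) := by
    intro i hi hA
    rcases hτt (lowSum κ i) (highSum κ i n) (hlowmem i (by omega)) (hhighmem i hi) with
      ⟨h1, h2⟩ | ⟨h1, h2⟩
    · exact absurd (le_trans h1 h2) (not_le.mpr hA.2)
    · rw [hsplit i (by omega)] at h1 h2
      exact ⟨h1, h2⟩
  have hbetB : ∀ i, i + 1 < n → SCondB τ τt n κ i →
      τt (lowSum κ i) ≤ τt (∑ j ∈ Finset.range n, κ j) ∧
      τt (∑ j ∈ Finset.range n, κ j) ≤ τt (highSum κ i n) := by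
    intro i hi hB
    rcases hτt (lowSum κ i) (highSum κ i n) (hlowmem i (by omega)) (hhighmem i hi) with
      ⟨h1, h2⟩ | ⟨h1, h2⟩
    · rw [hsplit i (by omega)] at h1 h2
      exact ⟨h1, h2⟩
    · rw [hsplit i (by omega)] at h1 h2
      exact ⟨le_trans hB.2 h1, le_trans h2 hB.2⟩
  -- Maximizer l : the largest index maximizing τ ∘ κ
  have hne : (Finset.range n).Nonempty := ⟨0, Finset.mem_range.mpr (by omega)⟩
  obtain ⟨l, hlF, hlmaxidx⟩ :
      ∃ l, l ∈ (Finset.range n).filter (fun i => ∀ j ∈ Finset.range n, τ (κ j) ≤ τ (κ i)) ∧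
        ∀ m ∈ (Finset.range n).filter (fun i => ∀ j ∈ Finset.range n, τ (κ j) ≤ τ (κ i)), m ≤ l := by
    have hFne : ((Finset.range n).filter
        (fun i => ∀ j ∈ Finset.range n, τ (κ j) ≤ τ (κ i))).Nonempty := by
      obtain ⟨b, hb, hmax⟩ := Finset.exists_max_image (Finset.range n) (fun i => τ (κ i)) hne
      exact ⟨b, Finset.mem_filter.mpr ⟨hb, hmax⟩⟩
    exact ⟨_, Finset.max'_mem _ hFne, fun m hm => Finset.le_max' _ m hm⟩
  have hln : l < n := Finset.mem_range.mp (Finset.mem_filter.mp hlF).1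
  have hlmax : ∀ j, j < n → τ (κ j) ≤ τ (κ l) := fun j hj =>
    (Finset.mem_filter.mp hlF).2 j (Finset.mem_range.mpr hj)
  have hlstrict : l + 1 < n → τ (κ (l+1)) < τ (κ l) := by
    intro h
    by_contra hcon
    push_neg at hcon
    have hmem : l + 1 ∈ (Finset.range n).filter
        (fun i => ∀ j ∈ Finset.range n, τ (κ j) ≤ τ (κ i)) :=
      Finset.mem_filter.mpr ⟨Finset.mem_range.mpr h,
        fun j hj => le_trans (hlmax j (Finset.mem_range.mp hj)) hcon⟩
    have := hlmaxidx (l+1) hmem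
    omega
  -- Minimizer k : the smallest index minimizing τ ∘ κ
  obtain ⟨k, hkF, hkminidx⟩ :
      ∃ k, k ∈ (Finset.range n).filter (fun i => ∀ j ∈ Finset.range n, τ (κ i) ≤ τ (κ j)) ∧
        ∀ m ∈ (Finset.range n).filter (fun i => ∀ j ∈ Finset.range n, τ (κ i) ≤ τ (κ j)), k ≤ m := by
    have hGne : ((Finset.range n).filter
        (fun i => ∀ j ∈ Finset.range n, τ (κ i) ≤ τ (κ j))).Nonempty := by
      obtain ⟨b, hb, hmin⟩ := Finset.exists_min_image (Finset.range n) (fun i => τ (κ i)) hne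
      exact ⟨b, Finset.mem_filter.mpr ⟨hb, hmin⟩⟩
    exact ⟨_, Finset.min'_mem _ hGne, fun m hm => Finset.min'_le _ m hm⟩
  have hkn : k < n := Finset.mem_range.mp (Finset.mem_filter.mp hkF).1
  have hkmin : ∀ j, j < n → τ (κ k) ≤ τ (κ j) := fun j hj =>
    (Finset.mem_filter.mp hkF).2 j (Finset.mem_range.mpr hj)
  have hkstrict : ∀ i, i + 1 = k → τ (κ k) < τ (κ i) := by
    intro i hik
    by_contra hcon
    push_neg at hcon
    have hmem : i ∈ (Finset.range n).filter
        (fun j => ∀ j' ∈ Finset.range n, τ (κ j) ≤ τ (κ j')) :=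
      Finset.mem_filter.mpr ⟨Finset.mem_range.mpr (by omega),
        fun j hj => le_trans hcon (hkmin j (Finset.mem_range.mp hj))⟩
    have := hkminidx i hmem
    omega
  -- the two main claims
  have claim_l : τt (κ l) ≤ τt (∑ j ∈ Finset.range n, κ j) := by
    rcases eq_or_lt_of_le hn with h1 | h2
    · have hl0 : l = 0 := by omega
      subst hl0
      rw [← h1, Finset.sum_range_one]
    rcases Nat.lt_or_ge (l+1) n with hl1 | hl1
    · -- l + 1 < n
      have hstrict := hlstrict hl1
      rcases Nat.eq_zero_or_pos l with hl0 | hl0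
      · -- l = 0
        subst hl0
        rcases H' 0 (by omega) with hA | hB
        · exact absurd hA.1 (not_le.mpr hstrict)
        · have h := (hbetB 0 (by omega) hB).1
          unfold lowSum at h
          rwa [Finset.sum_range_one] at h
      · -- 0 < l < n - 1
        obtain ⟨i, rfl⟩ := Nat.exists_eq_succ_of_ne_zero (by omega : l ≠ 0)
        have hA : SCondA τ τt n κ i := by
          rcases H' i (by omega) with hA | hB
          · exact hA
          · exact absurd hB.1 (not_lt.mpr (hlmax i (by omega)))
        have hB : SCondB τ τt n κ (i+1) := by
          rcases H' (i+1) (by omega) with hA' | hB'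
          · exact absurd hA'.1 (not_le.mpr hstrict)
          · exact hB'
        obtain ⟨hA1, hA2⟩ := hbetA i (by omega) hA
        obtain ⟨hB1, hB2⟩ := hbetB (i+1) (by omega) hB
        have hhs : highSum κ i n = κ (i+1) + highSum κ (i+1) n := by
          unfold highSum
          exact Finset.sum_eq_sum_Ico_succ_bot (by omega) κ
        have hls : lowSum κ (i+1) = lowSum κ i + κ (i+1) :=
          Finset.sum_range_succ κ (i+1)
        rcases hτt (κ (i+1)) (highSum κ (i+1) n) (hκ (i+1) (by omega))
            (hhighmem (i+1) (by omega)) with ⟨h1, _⟩ | ⟨h1, h2⟩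
        · rw [← hhs] at h1
          exact le_trans h1 hA1
        · rw [← hhs] at h1 h2
          have heq1 : τt (highSum κ i n) = τt (∑ j ∈ Finset.range n, κ j) :=
            le_antisymm hA1 (le_trans hB2 h1)
          rcases hτt (lowSum κ i) (κ (i+1)) (hlowmem i (by omega))
              (hκ (i+1) (by omega)) with ⟨g1, g2⟩ | ⟨g1, g2⟩
          · rw [← hls] at g1 g2
            have heq2 : τt (lowSum κ i) = τt (∑ j ∈ Finset.range n, κ j) :=
              le_antisymm (le_trans g1 hB1) hA2
            have hcontra := hA.2
            rw [heq1, heq2] at hcontra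
            exact absurd hcontra (lt_irrefl _)
          · rw [← hls] at g1 g2
            exact le_trans g1 hB1
    · -- l = n - 1
      have hln1 : l + 1 = n := by omega
      obtain ⟨i, rfl⟩ := Nat.exists_eq_succ_of_ne_zero (by omega : l ≠ 0)
      have hA : SCondA τ τt n κ i := by
        rcases H' i (by omega) with hA | hB
        · exact hA
        · exact absurd hB.1 (not_lt.mpr (hlmax i (by omega)))
      have h := (hbetA i (by omega) hA).1
      have hhs : highSum κ i n = κ (i+1) := by
        unfold highSum
        rw [← hln1, Finset.sum_Ico_succ_top (le_refl (i+1)), Finset.Ico_self,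
          Finset.sum_empty, zero_add]
      rwa [hhs] at h
  have claim_k : τt (∑ j ∈ Finset.range n, κ j) ≤ τt (κ k) := by
    rcases eq_or_lt_of_le hn with h1 | h2
    · have hk0 : k = 0 := by omega
      subst hk0
      rw [← h1, Finset.sum_range_one]
    rcases Nat.eq_zero_or_pos k with hk0 | hk0
    · -- k = 0
      subst hk0
      have hA : SCondA τ τt n κ 0 := by
        rcases H' 0 (by omega) with hA | hB
        · exact hA
        · exact absurd hB.1 (not_lt.mpr (hkmin 1 (by omega)))
      have h := (hbetA 0 (by omega) hA).2
      unfold lowSum at h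
      rwa [Finset.sum_range_one] at h
    obtain ⟨i, rfl⟩ := Nat.exists_eq_succ_of_ne_zero (by omega : k ≠ 0)
    have hstrict : τ (κ (i+1)) < τ (κ i) := hkstrict i rfl
    have hB : SCondB τ τt n κ i := by
      rcases H' i (by omega) with hA | hB
      · exact absurd hA.1 (not_le.mpr hstrict)
      · exact hB
    obtain ⟨hB1, hB2⟩ := hbetB i (by omega) hB
    rcases Nat.lt_or_ge (i+2) n with hi2 | hi2
    · -- interior minimizer
      have hA : SCondA τ τt n κ (i+1) := by
        rcases H' (i+1) (by omega) with hA' | hB'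
        · exact hA'
        · exact absurd hB'.1 (not_lt.mpr (hkmin (i+2) (by omega)))
      obtain ⟨hA1, hA2⟩ := hbetA (i+1) (by omega) hA
      have hhs : highSum κ i n = κ (i+1) + highSum κ (i+1) n := by
        unfold highSum
        exact Finset.sum_eq_sum_Ico_succ_bot (by omega) κ
      have hls : lowSum κ (i+1) = lowSum κ i + κ (i+1) :=
        Finset.sum_range_succ κ (i+1)
      rcases hτt (lowSum κ i) (κ (i+1)) (hlowmem i (by omega))
          (hκ (i+1) (by omega)) with ⟨g1, g2⟩ | ⟨g1, g2⟩
      · rw [← hls] at g1 g2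
        exact le_trans hA2 g2
      · rw [← hls] at g1 g2
        have heq2 : τt (lowSum κ (i+1)) = τt (∑ j ∈ Finset.range n, κ j) :=
          le_antisymm (le_trans g2 hB1) hA2
        rcases hτt (κ (i+1)) (highSum κ (i+1) n) (hκ (i+1) (by omega))
            (hhighmem (i+1) (by omega)) with ⟨h1, h2⟩ | ⟨h1, h2⟩
        · rw [← hhs] at h1 h2
          have heq1 : τt (highSum κ (i+1) n) = τt (∑ j ∈ Finset.range n, κ j) :=
            le_antisymm hA1 (le_trans hB2 h2)
          have hcontra := hA.2
          rw [heq1, heq2] at hcontra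
          exact absurd hcontra (lt_irrefl _)
        · rw [← hhs] at h1 h2
          exact le_trans hB2 h2
    · -- k = n - 1
      have hhs : highSum κ i n = κ (i+1) := by
        unfold highSum
        have : n = i + 2 := by omega
        rw [this, Finset.sum_Ico_succ_top (le_refl (i+1)), Finset.Ico_self,
          Finset.sum_empty, zero_add]
      rw [hhs] at hB2
      exact hB2
  exact ⟨k, l, hkn, hln, fun i hi => ⟨hkmin i hi, hlmax i hi⟩, claim_k, claim_l⟩
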